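/- There is no product vector |α⟩⊗|β⟩ in ℂ³ ⊗ ℂ³ such that ⟨αβ|ψ₁⟩ ≠ 0 while ⟨αβ|ψ₂⟩ = ⟨αβ|ψ₃⟩ = ⟨αβ|ψ₄⟩ = 0, where |ψ₁⟩ = |00⟩+|11⟩+|22⟩, |ψ₂⟩ = |00⟩+ω|11⟩+ω²|22⟩, |ψ₃⟩ = |00⟩+ω²|11⟩+ω|22⟩, |ψ₄⟩ = |01⟩, with ω = e^{2πi/3}. -/

import Mathlib

open scoped ComplexInnerProductSpace

/-- ω = e^{2πi/3}. -/
noncomputable def omega : ℂ := Complex.exp (2 * Real.pi * Complex.I / 3)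

/-- Product vector α ⊗ β in ℂ³ ⊗ ℂ³ ≅ ℂ^(3×3). -/
noncomputable def prodVec (α β : EuclideanSpace ℂ (Fin 3)) :
    EuclideanSpace ℂ (Fin 3 × Fin 3) :=
  WithLp.toLp 2 (fun p => α p.1 * β p.2)

noncomputable def psiQutrit : Fin 4 → EuclideanSpace ℂ (Fin 3 × Fin 3)
  | 0 => WithLp.toLp 2 (fun p => if p = (0, 0) then 1 else if p = (1, 1) then 1 else
      if p = (2, 2) then 1 else 0)
  | 1 => WithLp.toLp 2 (fun p => if p = (0, 0) then 1 else if p = (1, 1) then omega else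
      if p = (2, 2) then omega ^ 2 else 0)
  | 2 => WithLp.toLp 2 (fun p => if p = (0, 0) then 1 else if p = (1, 1) then omega ^ 2 else
      if p = (2, 2) then omega else 0)
  | 3 => WithLp.toLp 2 (fun p => if p = (0, 1) then 1 else 0)

lemma omega_ne_one : omega ≠ 1 := by
  intro hc
  rw [omega, Complex.exp_eq_one_iff] at hc
  obtain ⟨n, hn⟩ := hc
  have h2pi : (2 * (Real.pi : ℂ) * Complex.I) ≠ 0 := by
    simp [Real.pi_ne_zero, Complex.I_ne_zero]
  have h13 : ((1 : ℂ)/3) * (2 * (Real.pi : ℂ) * Complex.I)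
      = (n : ℂ) * (2 * (Real.pi : ℂ) * Complex.I) := by linear_combination hn
  have hn13 := mul_right_cancel₀ h2pi h13
  have h3n : ((3 * n : ℤ) : ℂ) = 1 := by push_cast; linear_combination 3 * hn13.symm
  have : (3 * n : ℤ) = 1 := by exact_mod_cast h3n
  omega

lemma omega_ne_zero : omega ≠ 0 := Complex.exp_ne_zero _

lemma omega_pow_three : omega ^ 3 = 1 := by
  rw [omega, ← Complex.exp_nat_mul]
  norm_num
  rw [show (3 : ℂ) * (2 * Real.pi * Complex.I / 3) = 2 * Real.pi * Complex.I by ring]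
  exact Complex.exp_two_pi_mul_I

lemma omega_sum : 1 + omega + omega ^ 2 = 0 := by
  have h : (omega - 1) * (1 + omega + omega ^ 2) = 0 := by
    linear_combination omega_pow_three
  exact (mul_eq_zero.mp h).resolve_left (sub_ne_zero.mpr omega_ne_one)

lemma omega_sub_sq_ne : omega - omega ^ 2 ≠ 0 := by
  rw [show omega - omega ^ 2 = omega * (1 - omega) by ring]
  exact mul_ne_zero omega_ne_zero (sub_ne_zero.mpr (Ne.symm omega_ne_one))

/-- No product vector has nonzero overlap with ψ₁ and zero overlap with
ψ₂, ψ₃, ψ₄: the criterion for conclusive local identification of ψ₁ fails. -/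
theorem stmt6 :
    ¬ ∃ α β : EuclideanSpace ℂ (Fin 3),
      ⟪prodVec α β, psiQutrit 0⟫ ≠ 0 ∧
      ⟪prodVec α β, psiQutrit 1⟫ = 0 ∧
      ⟪prodVec α β, psiQutrit 2⟫ = 0 ∧
      ⟪prodVec α β, psiQutrit 3⟫ = 0 := by
  rintro ⟨α, β, h1, h2, h3, h4⟩
  simp only [psiQutrit, prodVec, PiLp.inner_apply, RCLike.inner_apply,
    Fintype.sum_prod_type, Fin.sum_univ_three, Prod.mk.injEq,
    show ((0:Fin 3) = 2) = False from by simp, show ((2:Fin 3) = 0) = False from by simp,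
    show ((1:Fin 3) = 2) = False from by simp, show ((2:Fin 3) = 1) = False from by simp,
    show ((0:Fin 3) = 1) = False from by simp, show ((1:Fin 3) = 0) = False from by simp]
    at h1 h2 h3 h4
  norm_num at h1 h2 h3 h4
  set a0 := (starRingEnd ℂ) (α 0) * (starRingEnd ℂ) (β 0) with ha0
  set a1 := (starRingEnd ℂ) (α 1) * (starRingEnd ℂ) (β 1) with ha1
  set a2 := (starRingEnd ℂ) (α 2) * (starRingEnd ℂ) (β 2) with ha2
  rcases h4 with h | h
  · -- α 0 = 0, hence a0 = 0
    have h0 : a0 = 0 := by rw [ha0, h]; simp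
    have e23 : (a1 - a2) * (omega - omega ^ 2) = 0 := by linear_combination h2 - h3
    have heq : a1 - a2 = 0 := (mul_eq_zero.mp e23).resolve_right omega_sub_sq_ne
    have hb1 : a1 = 0 := by
      linear_combination (-1 : ℂ) * h2 + h0 + (-omega ^ 2) * heq + a1 * omega_sum
    have hb2 : a2 = 0 := by linear_combination hb1 - heq
    exact h1 (by linear_combination h0 + hb1 + hb2)
  · -- β 1 = 0, hence a1 = 0
    have hb1 : a1 = 0 := by rw [ha1, h]; simp
    have e23 : (a0 + a2 * omega ^ 2) - (a0 + a2 * omega) = a2 * (omega ^ 2 - omega) := by ring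
    have hz : a2 * (omega ^ 2 - omega) = 0 := by linear_combination h2 - h3 - (omega - omega ^ 2) * hb1
    have hb2 : a2 = 0 := by
      rcases mul_eq_zero.mp hz with h' | h'
      · exact h'
      · exact absurd (by linear_combination -h' : omega - omega ^ 2 = 0) omega_sub_sq_ne
    have h0 : a0 = 0 := by linear_combination h2 - omega * hb1 - omega ^ 2 * hb2
    exact h1 (by linear_combination h0 + hb1 + hb2)
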